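/- arXiv:1206.6027 — 2 statements merged into one kernel-verified Lean document; each statement's English description precedes it below -/
import Mathlib

section
/- Let J be an L-saturated letterplace ideal of P̄ with D ⊆ J, and set I = ῑ^{-1}(J ∩ V̄). Then I is a saturated graded two-sided ideal of F̄ with C ⊆ I. -/
noncomputable section

/-! ### Common definitions for the letterplace correspondence (La Scala)

`FA K Y` is the free associative algebra `K⟨Y⟩` (monoid algebra of the free monoid on `Y`);
`PL K Y` is the letterplace polynomial algebra `K[y(j) : y ∈ Y, j ∈ ℕ*]`.
The algebra `F̄ = K⟨X ∪ {t}⟩` is modeled as `FA K (Option X)` with `t = none`,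
and similarly `P̄ = PL K (Option X)`. -/

/-- The free associative algebra `K⟨Y⟩`. -/
abbrev FA (K : Type*) [CommSemiring K] (Y : Type*) := MonoidAlgebra K (FreeMonoid Y)

/-- The letterplace polynomial algebra `K[y(j)]`, with places in `ℕ* = ℕ+`. -/
abbrev PL (K : Type*) [CommSemiring K] (Y : Type*) := MvPolynomial (Y × ℕ+) K

variable (K : Type*) [Field K]

/-- The generator of `K⟨Y⟩` corresponding to a letter. -/
def gen {Y : Type*} (y : Y) : FA K Y := MonoidAlgebra.of K (FreeMonoid Y) (FreeMonoid.of y)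

/-- The extra letter `t` of `F̄ = K⟨X ∪ {t}⟩`. -/
def tv {X : Type*} : FA K (Option X) := gen K (none : Option X)

/-- `φ : F̄ → F̄`, the algebra endomorphism with `φ(x_i) = x_i`, `φ(t) = 1`. -/
def phi {X : Type*} : FA K (Option X) →ₐ[K] FA K (Option X) :=
  (MonoidAlgebra.lift K (FA K (Option X)) (FreeMonoid (Option X)))
    (FreeMonoid.lift fun o => Option.elim o 1 (fun x => gen K (some x)))

/-- `f` is homogeneous of degree `d` (all words in its support have length `d`). -/
def IsHomog {Y : Type*} (d : ℕ) (f : FA K Y) : Prop :=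
  ∀ w ∈ f.coeff.support, FreeMonoid.length w = d

/-- The homogeneous component of degree `d` of `f ∈ K⟨Y⟩`. -/
def homComp {Y : Type*} (d : ℕ) (f : FA K Y) : FA K Y :=
  ∑ w ∈ f.coeff.support.filter (fun w => FreeMonoid.length w = d), MonoidAlgebra.single w (f.coeff w)

/-- A two-sided ideal is graded (for the grading by total degree) iff it contains all
homogeneous components of its elements. -/
def IsGradedF {Y : Type*} (I : TwoSidedIdeal (FA K Y)) : Prop := ∀ f ∈ I, ∀ d, homComp K d f ∈ I

/-- `C ⊆ F̄`: the two-sided ideal generated by all homogeneous elements of `ker φ`,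
i.e. the largest graded ideal contained in `ker φ`. -/
def Cideal {X : Type*} : TwoSidedIdeal (FA K (Option X)) :=
  TwoSidedIdeal.span {f | (∃ d, IsHomog K d f) ∧ phi K f = 0}

/-- The embedding of free monoids `X* → (X ∪ {t})*`. -/
def embWord {X : Type*} : FreeMonoid X →* FreeMonoid (Option X) := FreeMonoid.map some

/-- The canonical embedding `F = K⟨X⟩ → F̄ = K⟨X ∪ {t}⟩`. -/
def emb {X : Type*} : FA K X →ₐ[K] FA K (Option X) :=
  (MonoidAlgebra.lift K (FA K (Option X)) (FreeMonoid X))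
    ((MonoidAlgebra.of K (FreeMonoid (Option X))).comp embWord)

/-- The top degree `deg(f)` of `f` (max length of a word in the support). -/
def degF {Y : Type*} (f : FA K Y) : ℕ := f.coeff.support.sup FreeMonoid.length

/-- The homogenization `f^* = Σ_k f_k t^{deg f − k} ∈ F̄` of `f ∈ F`. -/
def hstar {X : Type*} (f : FA K X) : FA K (Option X) :=
  ∑ w ∈ f.coeff.support,
    MonoidAlgebra.single
      (embWord w * (FreeMonoid.of (none : Option X)) ^ (degF K f - FreeMonoid.length w)) (f.coeff w)

/-- Homogenization of an element already written in `F̄` (used for elements of `φ(F̄) = F`). -/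
def hstarO {X : Type*} (f : FA K (Option X)) : FA K (Option X) :=
  ∑ w ∈ f.coeff.support,
    MonoidAlgebra.single
      (w * (FreeMonoid.of (none : Option X)) ^ (degF K f - FreeMonoid.length w)) (f.coeff w)

/-- The homogenization `I^*` of an ideal `I ⊆ F`: the two-sided ideal of `F̄` generated by all
homogeneous elements of `φ⁻¹(I)` (identifying `F` with its image in `F̄`). -/
def hstarIdeal {X : Type*} (I : TwoSidedIdeal (FA K X)) : TwoSidedIdeal (FA K (Option X)) :=
  TwoSidedIdeal.span {g | (∃ d, IsHomog K d g) ∧ ∃ f ∈ I, phi K g = emb K f}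

/-- The saturation `Sat(J) = φ(J)^*` of a graded ideal `C ⊆ J ⊆ F̄`: the two-sided ideal
generated by all homogeneous elements `g` with `φ(g) ∈ φ(J)`. -/
def SatF {X : Type*} (J : TwoSidedIdeal (FA K (Option X))) : TwoSidedIdeal (FA K (Option X)) :=
  TwoSidedIdeal.span {g | (∃ d, IsHomog K d g) ∧ ∃ h ∈ J, phi K g = phi K h}

/-! ### The commutative (letterplace) side -/

/-- The shift of letterplace variables: `k · y(j) = y(j + k)`. -/
def shiftVar {Y : Type*} (k : ℕ) (p : Y × ℕ+) : Y × ℕ+ :=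
  (p.1, ⟨p.2 + k, Nat.add_pos_left p.2.2 k⟩)

/-- The action of `k ∈ ℕ` on the letterplace algebra. -/
def shift {Y : Type*} (k : ℕ) : PL K Y →ₐ[K] PL K Y := MvPolynomial.rename (shiftVar k)

/-- An ideal of `PL K Y` is an ℕ-ideal if it is stable under all shifts. -/
def IsNIdeal {Y : Type*} (I : Ideal (PL K Y)) : Prop := ∀ k, ∀ f ∈ I, shift K k f ∈ I

/-- The ℕ-ideal `⟨S⟩_ℕ` generated by a set `S`. -/
def nspan {Y : Type*} (S : Set (PL K Y)) : Ideal (PL K Y) :=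
  Ideal.span {g | ∃ k, ∃ f ∈ S, g = shift K k f}

/-- The place multidegree `∂(m)` of a monomial. -/
def placeDeg {Y : Type*} (m : (Y × ℕ+) →₀ ℕ) : ℕ+ →₀ ℕ := Finsupp.mapDomain Prod.snd m

/-- `f` is multihomogeneous of place multidegree `μ`. -/
def IsMultiHomog {Y : Type*} (μ : ℕ+ →₀ ℕ) (f : PL K Y) : Prop :=
  ∀ m ∈ f.support, placeDeg m = μ

/-- The multihomogeneous component of multidegree `μ` of `f`. -/
def mComp {Y : Type*} (μ : ℕ+ →₀ ℕ) (f : PL K Y) : PL K Y :=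
  ∑ m ∈ f.support.filter (fun m => placeDeg m = μ),
    MvPolynomial.monomial m (MvPolynomial.coeff m f)

/-- An ideal is multigraded iff it contains all multihomogeneous components of its elements. -/
def IsMultiGraded {Y : Type*} (I : Ideal (PL K Y)) : Prop := ∀ f ∈ I, ∀ μ, mComp K μ f ∈ I

/-- `ψ : P̄ → P̄`, with `ψ(x_i(j)) = x_i(j)` and `ψ(t(j)) = 1`. -/
def psi {X : Type*} : PL K (Option X) →ₐ[K] PL K (Option X) :=
  MvPolynomial.aeval (fun p => Option.elim p.1 1 (fun x => MvPolynomial.X (some x, p.2)))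

/-- The canonical embedding `P → P̄`. -/
def embP {X : Type*} : PL K X →ₐ[K] PL K (Option X) :=
  MvPolynomial.rename (fun p => (some p.1, p.2))

/-- The top multidegree `∂(f)` of `f` (componentwise max over the support). -/
def topDeg {Y : Type*} (f : PL K Y) : ℕ+ →₀ ℕ := f.support.sup placeDeg

/-- The pure-`t` monomial `∏_k t(k)^{ν_k}` with exponents `ν`. -/
def tExp {X : Type*} (ν : ℕ+ →₀ ℕ) : ((Option X) × ℕ+) →₀ ℕ :=
  Finsupp.mapDomain (fun k => ((none : Option X), k)) ν

/-- The multihomogenization `f^* = Σ_μ f_μ ∏_k t(k)^{ν_k − μ_k} ∈ P̄` of `f ∈ P`. -/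
def mhstar {X : Type*} (f : PL K X) : PL K (Option X) :=
  ∑ m ∈ f.support,
    MvPolynomial.monomial
      (Finsupp.mapDomain (fun p => ((some p.1 : Option X), p.2)) m +
        tExp (topDeg K f - placeDeg m))
      (MvPolynomial.coeff m f)

/-- Multihomogenization of an element already written in `P̄` (used for elements of `ψ(P̄) = P`). -/
def mhstarO {X : Type*} (f : PL K (Option X)) : PL K (Option X) :=
  ∑ m ∈ f.support,
    MvPolynomial.monomial (m + tExp (topDeg K f - placeDeg m)) (MvPolynomial.coeff m f)

/-- The multihomogenization `I^*` of an ℕ-ideal `I ⊆ P`: the ℕ-ideal of `P̄` generated by all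
multihomogeneous elements of `ψ⁻¹(I)` (identifying `P` with its image in `P̄`). -/
def mhstarIdeal {X : Type*} (I : Ideal (PL K X)) : Ideal (PL K (Option X)) :=
  nspan K {g | (∃ μ, IsMultiHomog K μ g) ∧ ∃ f ∈ I, psi K g = embP K f}

/-- The saturation `Sat(J) = ψ(J)^*` of a multigraded ℕ-ideal `J ⊆ P̄`. -/
def SatP {X : Type*} (J : Ideal (PL K (Option X))) : Ideal (PL K (Option X)) :=
  nspan K {g | (∃ μ, IsMultiHomog K μ g) ∧ ∃ h ∈ J, psi K g = psi K h}

/-! ### The letterplace embedding -/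

/-- Exponent vector of the letterplace monomial `y_1(n+1) y_2(n+2) ⋯` of a word. -/
def wordExpAux {Y : Type*} : ℕ → List Y → ((Y × ℕ+) →₀ ℕ)
  | _, [] => 0
  | n, y :: w => Finsupp.single (y, ⟨n + 1, n.succ_pos⟩) 1 + wordExpAux (n + 1) w

/-- The letterplace monomial `y_1(1) y_2(2) ⋯ y_d(d)` of a word `y_1 y_2 ⋯ y_d`. -/
def wordExp {Y : Type*} (w : FreeMonoid Y) : (Y × ℕ+) →₀ ℕ := wordExpAux 0 (FreeMonoid.toList w)

/-- The letterplace embedding `ι : K⟨Y⟩ → PL K Y` (a `K`-linear map). -/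
def iota {Y : Type*} (f : FA K Y) : PL K Y :=
  Finsupp.sum f.coeff fun w c => MvPolynomial.monomial (wordExp w) c

/-- The set `L` of multilinear elements of `PL K Y`: multihomogeneous elements of `V = Im ι`. -/
def Lset {Y : Type*} : Set (PL K Y) :=
  {f | f ∈ Set.range (iota K (Y := Y)) ∧ ∃ μ, IsMultiHomog K μ f}

/-- A letterplace ideal (`L`-ideal): an ℕ-ideal ℕ-generated by its multilinear elements. -/
def IsLPIdeal {Y : Type*} (J : Ideal (PL K Y)) : Prop :=
  IsNIdeal K J ∧ J = nspan K ((J : Set (PL K Y)) ∩ Lset K)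

/-- The generators `x_i(1)t(2) − t(1)x_i(2)` of `D`. -/
def Dgens (X : Type*) : Set (PL K (Option X)) :=
  {g | ∃ x : X,
    g = MvPolynomial.X ((some x : Option X), (1 : ℕ+)) *
          MvPolynomial.X ((none : Option X), (2 : ℕ+)) -
        MvPolynomial.X ((none : Option X), (1 : ℕ+)) *
          MvPolynomial.X ((some x : Option X), (2 : ℕ+))}

/-- The generators `ῑ([t, x_i]) = t(1)x_i(2) − x_i(1)t(2)` of `D`. -/
def DgensT (X : Type*) : Set (PL K (Option X)) :=
  {g | ∃ x : X,
    g = MvPolynomial.X ((none : Option X), (1 : ℕ+)) *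
          MvPolynomial.X ((some x : Option X), (2 : ℕ+)) -
        MvPolynomial.X ((some x : Option X), (1 : ℕ+)) *
          MvPolynomial.X ((none : Option X), (2 : ℕ+))}

/-- `D ⊆ P̄`: the letterplace analogue of `C`. -/
def Did (X : Type*) : Ideal (PL K (Option X)) := nspan K (Dgens K X)

/-- The product `∏_{d < k ≤ d'} t(k)`. -/
def tProd (X : Type*) (d d' : ℕ) : PL K (Option X) :=
  ∏ k ∈ Finset.range (d' - d), MvPolynomial.X ((none : Option X), ⟨d + k + 1, Nat.succ_pos _⟩)

/-- The `L`-saturation `Sat_L(J)` of a letterplace ideal `D ⊆ J ⊆ P̄`. -/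
def SatL {X : Type*} (J : Ideal (PL K (Option X))) : Ideal (PL K (Option X)) :=
  nspan K {f | f ∈ Lset K ∧ ∃ d', MvPolynomial.totalDegree f ≤ d' ∧
    tProd K X (MvPolynomial.totalDegree f) d' * f ∈ J}

/-- `J` is `L`-saturated: `t(d+1)·f ∈ J` with `f` multilinear of degree `d` implies `f ∈ J`. -/
def IsLSat {X : Type*} (J : Ideal (PL K (Option X))) : Prop :=
  ∀ f ∈ Lset K (Y := Option X),
    MvPolynomial.X ((none : Option X), ⟨MvPolynomial.totalDegree f + 1, Nat.succ_pos _⟩) * f ∈ J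
      → f ∈ J

/-! ### Monomial orderings -/

/-- The shift action on letterplace monomials. -/
def shiftMon {Y : Type*} (k : ℕ) (m : (Y × ℕ+) →₀ ℕ) : (Y × ℕ+) →₀ ℕ :=
  Finsupp.mapDomain (shiftVar k) m

/-- A monomial ordering of a (possibly infinite) commutative polynomial ring, given as a strict
order relation on exponent vectors: a well-founded strict total order with `1` minimal,
compatible with multiplication of monomials. -/
structure IsMonOrd {σ : Type*} (r : (σ →₀ ℕ) → (σ →₀ ℕ) → Prop) : Prop where
  total : ∀ m n, r m n ∨ m = n ∨ r n m
  irrefl : ∀ m, ¬ r m m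
  trans : ∀ a b c, r a b → r b c → r a c
  wf : WellFounded r
  zero_min : ∀ m, ¬ r m 0
  add_compat : ∀ m n u, r m n → r (u + m) (u + n)

/-- The ordering is compatible with the ℕ-action (an `ℕ`-ordering). -/
def IsNCompat {Y : Type*} (r : ((Y × ℕ+) →₀ ℕ) → ((Y × ℕ+) →₀ ℕ) → Prop) : Prop :=
  ∀ (k : ℕ) m n, r m n → r (shiftMon k m) (shiftMon k n)

/-- The weight of a letterplace monomial: the largest place index occurring in it
(`⊥ = -∞` for the monomial `1`). -/
def wt {Y : Type*} (m : (Y × ℕ+) →₀ ℕ) : WithBot ℕ :=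
  m.support.sup (fun p => ((p.2 : ℕ) : WithBot ℕ))

/-- A weighted ordering: smaller weight implies smaller monomial. -/
def IsWeighted {Y : Type*} (r : ((Y × ℕ+) →₀ ℕ) → ((Y × ℕ+) →₀ ℕ) → Prop) : Prop :=
  ∀ m n, wt m < wt n → r m n

/-- A monomial ordering of the free algebra `K⟨Y⟩`: a well-founded strict total order on words
compatible with two-sided multiplication. -/
structure IsWordOrd {Y : Type*} (r : FreeMonoid Y → FreeMonoid Y → Prop) : Prop where
  total : ∀ m n, r m n ∨ m = n ∨ r n m
  irrefl : ∀ m, ¬ r m m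
  trans : ∀ a b c, r a b → r b c → r a c
  wf : WellFounded r
  mul_compat : ∀ m n u v, r m n → r (u * m * v) (u * n * v)

/-- A word ordering is graded if shorter words are smaller. -/
def IsGradedWordOrd {Y : Type*} (r : FreeMonoid Y → FreeMonoid Y → Prop) : Prop :=
  ∀ m n, FreeMonoid.length m < FreeMonoid.length n → r m n

/-- The word ordering of `K⟨Y⟩` induced by a monomial ordering of `PL K Y` via `ι`. -/
def inducedWordOrd {Y : Type*} (r : ((Y × ℕ+) →₀ ℕ) → ((Y × ℕ+) →₀ ℕ) → Prop)
    (m n : FreeMonoid Y) : Prop := r (wordExp m) (wordExp n)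

/-- The factor of a letterplace monomial at place `j` (a monomial of `P(j) ≅ P(1)`). -/
def fiber {Y : Type*} (m : (Y × ℕ+) →₀ ℕ) (j : ℕ+) : Y →₀ ℕ :=
  Finsupp.comapDomain (fun y => (y, j)) m (fun _ _ _ _ h => congrArg Prod.fst h)

/-- The place `ℕ`-ordering of `PL K Y` induced by a monomial ordering `r1` of `P(1)`:
compare the factors at the highest place where the two monomials differ. -/
def placeExt {Y : Type*} (r1 : (Y →₀ ℕ) → (Y →₀ ℕ) → Prop)
    (m n : (Y × ℕ+) →₀ ℕ) : Prop :=
  ∃ j : ℕ+, r1 (fiber m j) (fiber n j) ∧ ∀ j', j < j' → fiber m j' = fiber n j'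

/-! ### Leading monomials and Gröbner bases -/

/-- `m` is the leading monomial of `f ∈ PL K Y` with respect to the ordering `r`. -/
def IsLM {Y : Type*} (r : ((Y × ℕ+) →₀ ℕ) → ((Y × ℕ+) →₀ ℕ) → Prop)
    (f : PL K Y) (m : (Y × ℕ+) →₀ ℕ) : Prop :=
  m ∈ f.support ∧ ∀ m' ∈ f.support, m' ≠ m → r m' m

/-- `LM(S)`: the ideal generated by the leading monomials of the nonzero elements of `S`. -/
def LMideal {Y : Type*} (r : ((Y × ℕ+) →₀ ℕ) → ((Y × ℕ+) →₀ ℕ) → Prop)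
    (S : Set (PL K Y)) : Ideal (PL K Y) :=
  Ideal.span {p | ∃ f ∈ S, f ≠ 0 ∧ ∃ m, IsLM K r f m ∧ p = MvPolynomial.monomial m (1 : K)}

/-- The ideal generated by `ℕ·lm(G)`. -/
def shLMideal {Y : Type*} (r : ((Y × ℕ+) →₀ ℕ) → ((Y × ℕ+) →₀ ℕ) → Prop)
    (G : Set (PL K Y)) : Ideal (PL K Y) :=
  Ideal.span {p | ∃ g ∈ G, g ≠ 0 ∧ ∃ m, IsLM K r g m ∧
    ∃ k : ℕ, p = MvPolynomial.monomial (shiftMon k m) (1 : K)}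

/-- `G ⊆ I` is a Gröbner `ℕ`-basis of the ℕ-ideal `I`: `ℕ·lm(G)` generates `LM(I)`. -/
def IsGroebnerNB {Y : Type*} (r : ((Y × ℕ+) →₀ ℕ) → ((Y × ℕ+) →₀ ℕ) → Prop)
    (I : Ideal (PL K Y)) (G : Set (PL K Y)) : Prop :=
  G ⊆ (I : Set (PL K Y)) ∧ shLMideal K r G = LMideal K r (I : Set (PL K Y))

/-- `G` is a Gröbner `L`-basis of the letterplace ideal `J`: `G ⊆ J ∩ L` and the leading monomial
of every nonzero multilinear element of `J` is divisible by a shift of some `lm(g)`, `g ∈ G`. -/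
def IsGroebnerLB {Y : Type*} (r : ((Y × ℕ+) →₀ ℕ) → ((Y × ℕ+) →₀ ℕ) → Prop)
    (J : Ideal (PL K Y)) (G : Set (PL K Y)) : Prop :=
  G ⊆ (J : Set (PL K Y)) ∩ Lset K ∧
  ∀ f ∈ (J : Set (PL K Y)) ∩ Lset K, f ≠ 0 →
    ∃ g ∈ G, ∃ (k : ℕ) (mg mf : (Y × ℕ+) →₀ ℕ),
      IsLM K r g mg ∧ IsLM K r f mf ∧ shiftMon k mg ≤ mf

/-- `w` is the leading monomial (word) of `f ∈ K⟨Y⟩` with respect to the word ordering `r'`. -/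
def IsLMF {Y : Type*} (r' : FreeMonoid Y → FreeMonoid Y → Prop)
    (f : FA K Y) (w : FreeMonoid Y) : Prop :=
  w ∈ f.coeff.support ∧ ∀ w' ∈ f.coeff.support, w' ≠ w → r' w' w

/-- `G ⊆ I` is a Gröbner basis of the two-sided ideal `I ⊆ K⟨Y⟩`: the leading word of every
nonzero `f ∈ I` has the form `u · lm(g) · v` for some nonzero `g ∈ G`. -/
def IsGroebnerBF {Y : Type*} (r' : FreeMonoid Y → FreeMonoid Y → Prop)
    (I : TwoSidedIdeal (FA K Y)) (G : Set (FA K Y)) : Prop :=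
  G ⊆ (I : Set (FA K Y)) ∧
  ∀ f ∈ I, f ≠ 0 → ∃ g ∈ G, g ≠ 0 ∧ ∃ (u v wf wg : FreeMonoid Y),
    IsLMF K r' f wf ∧ IsLMF K r' g wg ∧ wf = u * wg * v

/-! ### Normal forms -/

/-- The generators `x_i(1) x_j(1)` of `N`. -/
def Ngens (Y : Type*) : Set (PL K Y) :=
  {g | ∃ i j : Y, g = MvPolynomial.X (i, (1 : ℕ+)) * MvPolynomial.X (j, (1 : ℕ+))}

/-- A polynomial is in normal form modulo `N` iff in each of its monomials all place indices
are pairwise distinct. -/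
def NormalModN {Y : Type*} (f : PL K Y) : Prop :=
  ∀ m ∈ f.support, ∀ k : ℕ+, placeDeg m k ≤ 1

/-- A polynomial is in normal form modulo `D` iff none of its monomials is divisible by a shift
of the leading monomial of some generator `t(1)x_i(2) − x_i(1)t(2)` of `D`. -/
def NormalModD {X : Type*} (r : (((Option X) × ℕ+) →₀ ℕ) → (((Option X) × ℕ+) →₀ ℕ) → Prop)
    (f : PL K (Option X)) : Prop :=
  ∀ m ∈ f.support, ∀ g ∈ DgensT K X, ∀ mg, IsLM K r g mg → ∀ k : ℕ, ¬ shiftMon k mg ≤ m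

/-- `G` is a Gröbner `L`-basis of `J` modulo `D`: its elements are multilinear elements of `J`
in normal form modulo `D`, and together with the generators of `D` they form a
Gröbner `L`-basis of `J`. -/
def IsGroebnerLBmodD {X : Type*}
    (r : (((Option X) × ℕ+) →₀ ℕ) → (((Option X) × ℕ+) →₀ ℕ) → Prop)
    (J : Ideal (PL K (Option X))) (G : Set (PL K (Option X))) : Prop :=
  (∀ g ∈ G, g ∈ (J : Set (PL K (Option X))) ∩ Lset K ∧ NormalModD K r g) ∧
  IsGroebnerLB K r J (G ∪ DgensT K X)

/-- The commutators `[t, x_i] = t x_i − x_i t` in `F̄`. -/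
def commGens (X : Type*) : Set (FA K (Option X)) :=
  {h | ∃ x : X, h = tv K * gen K (some x) - gen K (some x) * tv K}

/-- A polynomial of `F̄` is in normal form modulo `C` iff none of its words contains the leading
word of some commutator `[t, x_i]` as a factor. -/
def NormalModC {X : Type*} (r' : FreeMonoid (Option X) → FreeMonoid (Option X) → Prop)
    (f : FA K (Option X)) : Prop :=
  ∀ w ∈ f.coeff.support, ∀ g ∈ commGens K X, ∀ wg, IsLMF K r' g wg →
    ¬ ∃ u v, w = u * wg * v

/-! ### Concrete orderings on words -/

/-- The order on the letters of `X ∪ {t}` (with `X = ℕ`): `t ≺ x_1 ≺ x_2 ≺ ⋯`. -/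
def optLt : Option ℕ → Option ℕ → Prop
  | none, some _ => True
  | some i, some j => i < j
  | _, none => False

/-- The graded right lexicographic ordering on words: first compare lengths, then compare
letter by letter from the right. -/
def grRightLex {Y : Type*} (lt : Y → Y → Prop) (dflt : Y) (m n : FreeMonoid Y) : Prop :=
  FreeMonoid.length m < FreeMonoid.length n ∨
  (FreeMonoid.length m = FreeMonoid.length n ∧
    ∃ t < FreeMonoid.length m,
      lt ((FreeMonoid.toList m).getD t dflt) ((FreeMonoid.toList n).getD t dflt) ∧
      ∀ s, t < s → (FreeMonoid.toList m).getD s dflt = (FreeMonoid.toList n).getD s dflt)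

end

noncomputable section Aux
open MvPolynomial

variable {K : Type*} [Field K]

lemma pnat_mk_eq {a b : ℕ} (ha : 0 < a) (hb : 0 < b) (h : a = b) : (⟨a, ha⟩ : ℕ+) = ⟨b, hb⟩ := by
  subst h; rfl

lemma shiftMon_add {Y : Type*} (k : ℕ) (m n : (Y × ℕ+) →₀ ℕ) :
    shiftMon k (m + n) = shiftMon k m + shiftMon k n := Finsupp.mapDomain_add

lemma shiftMon_single {Y : Type*} (k : ℕ) (p : Y × ℕ+) (c : ℕ) :
    shiftMon k (Finsupp.single p c) = Finsupp.single (shiftVar k p) c := Finsupp.mapDomain_single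

lemma shiftMon_zero {Y : Type*} (k : ℕ) : shiftMon k (0 : (Y × ℕ+) →₀ ℕ) = 0 :=
  Finsupp.mapDomain_zero

lemma shiftVar_mk {Y : Type*} (k m : ℕ) (h : 0 < m + 1) (y : Y) :
    shiftVar k (y, ⟨m + 1, h⟩) = (y, ⟨m + 1 + k, by omega⟩) := rfl

lemma wordExpAux_shift {Y : Type*} (w : List Y) :
    ∀ m n : ℕ, shiftMon n (wordExpAux m w) = wordExpAux (m + n) w := by
  induction w with
  | nil => intro m n; simp [wordExpAux, shiftMon_zero]
  | cons y u ih =>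
    intro m n
    show shiftMon n (Finsupp.single (y, ⟨m+1, _⟩) 1 + wordExpAux (m+1) u) = _
    rw [shiftMon_add, shiftMon_single, ih, shiftVar_mk]
    show _ = Finsupp.single (y, ⟨m + n + 1, Nat.succ_pos _⟩) 1 + wordExpAux (m + n + 1) u
    simp only [show m + 1 + n = m + n + 1 from by omega]

lemma wordExpAux_append {Y : Type*} (u v : List Y) :
    ∀ m : ℕ, wordExpAux m (u ++ v) = wordExpAux m u + wordExpAux (m + u.length) v := by
  induction u with
  | nil => intro m; simp [wordExpAux]
  | cons y u ih =>
    intro m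
    show Finsupp.single (y, ⟨m+1, Nat.succ_pos m⟩) 1 + wordExpAux (m+1) (u ++ v)
        = (Finsupp.single (y, ⟨m+1, Nat.succ_pos m⟩) 1 + wordExpAux (m+1) u)
          + wordExpAux (m + (y::u).length) v
    rw [ih]
    rw [show m + (y :: u).length = m + 1 + u.length from by simp [List.length_cons]; omega]
    exact (add_assoc _ _ _).symm

lemma wordExp_ofList_append {Y : Type*} (u v : List Y) :
    wordExp (FreeMonoid.ofList (u ++ v))
      = wordExp (FreeMonoid.ofList u) + shiftMon u.length (wordExp (FreeMonoid.ofList v)) := by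
  show wordExpAux 0 (u ++ v) = wordExpAux 0 u + shiftMon u.length (wordExpAux 0 v)
  rw [wordExpAux_append, wordExpAux_shift]

lemma wordExp_mul {Y : Type*} (u v : FreeMonoid Y) :
    wordExp (u * v) = wordExp u + shiftMon (FreeMonoid.length u) (wordExp v) :=
  wordExp_ofList_append (FreeMonoid.toList u) (FreeMonoid.toList v)

end Aux
noncomputable section Aux2
open MvPolynomial

variable {K : Type*} [Field K] {Y : Type*}

/-- iota as a linear map. -/
def iotaL (K : Type*) [Field K] (Y : Type*) : FA K Y →ₗ[K] PL K Y :=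
  (Finsupp.lsum K fun w => MvPolynomial.monomial (wordExp w)) ∘ₗ
    (MonoidAlgebra.coeffLinearEquiv K).toLinearMap

lemma iota_eq (f : FA K Y) : iota K f = iotaL K Y f := by
  rfl

lemma iota_single (w : FreeMonoid Y) (c : K) :
    iota K (MonoidAlgebra.single w c) = MvPolynomial.monomial (wordExp w) c := by
  rw [iota, MonoidAlgebra.coeff_single]; exact Finsupp.sum_single_index (by simp)

/-- the place-weight function. -/
def plw {Y : Type*} : (Y × ℕ+) → (ℕ+ →₀ ℕ) := fun p => Finsupp.single p.2 1

lemma weight_plw (m : (Y × ℕ+) →₀ ℕ) : (Finsupp.weight plw) m = placeDeg m := by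
  rw [Finsupp.weight_apply, placeDeg, Finsupp.mapDomain]
  congr 1
  funext p k
  simp [plw, Finsupp.smul_single]

lemma isWeightedHomog_iff (f : PL K Y) (μ : ℕ+ →₀ ℕ) :
    IsWeightedHomogeneous plw f μ ↔ IsMultiHomog K μ f := by
  constructor
  · intro h m hm
    rw [← weight_plw]
    exact h (MvPolynomial.mem_support_iff.mp hm)
  · intro h m hm
    rw [weight_plw]
    exact h m (MvPolynomial.mem_support_iff.mpr hm)

lemma whc_mem_of_mem_span {S : Set (PL K Y)}
    (hS : ∀ s ∈ S, ∃ μ, IsMultiHomog K μ s) {h : PL K Y} (hh : h ∈ Ideal.span S)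
    (μ : ℕ+ →₀ ℕ) : weightedHomogeneousComponent plw μ h ∈ Ideal.span S := by
  letI : GradedAlgebra (weightedHomogeneousSubmodule K (plw (Y := Y))) :=
    weightedGradedAlgebra K plw
  have hhom : (Ideal.span S).IsHomogeneous (weightedHomogeneousSubmodule K plw) := by
    refine Ideal.homogeneous_span _ _ fun x hx => ?_
    obtain ⟨μ', hμ'⟩ := hS x hx
    exact ⟨μ', (mem_weightedHomogeneousSubmodule _ _ _ _).mpr
      ((isWeightedHomog_iff x μ').mpr hμ')⟩
  have h2 := hhom μ hh
  rwa [show ((DirectSum.decompose (weightedHomogeneousSubmodule K plw) h μ : _) : PL K Y)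
      = weightedHomogeneousComponent plw μ h from MvPolynomial.decompose'_apply K plw h μ] at h2

lemma whc_monomial (μ : ℕ+ →₀ ℕ) (m : (Y × ℕ+) →₀ ℕ) (c : K) :
    weightedHomogeneousComponent plw μ (MvPolynomial.monomial m c)
      = if placeDeg m = μ then MvPolynomial.monomial m c else 0 := by
  classical
  ext d
  rw [coeff_weightedHomogeneousComponent]
  by_cases hmd : m = d
  · subst hmd
    by_cases h : placeDeg m = μ <;> simp [h, MvPolynomial.coeff_monomial, weight_plw]
  · by_cases h : placeDeg m = μ <;>
      simp only [h, if_true, if_false, weight_plw] <;>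
      by_cases h2 : placeDeg d = μ <;>
      simp [h2, MvPolynomial.coeff_monomial, hmd]

end Aux2
noncomputable section Aux3
open MvPolynomial

variable {K : Type*} [Field K] {Y : Type*}

/-- The staircase multidegree: places `n+1, …, n+l`, each with exponent 1. -/
def stairN : ℕ → ℕ → (ℕ+ →₀ ℕ)
  | _, 0 => 0
  | n, l + 1 => Finsupp.single ⟨n + 1, Nat.succ_pos n⟩ 1 + stairN (n + 1) l

/-- Total degree of a place multidegree. -/
def degS (μ : ℕ+ →₀ ℕ) : ℕ := μ.sum fun _ k => k

lemma degS_add (μ ν : ℕ+ →₀ ℕ) : degS (μ + ν) = degS μ + degS ν :=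
  Finsupp.sum_add_index' (fun _ => rfl) (fun _ _ _ => rfl)

lemma degS_single (j : ℕ+) (c : ℕ) : degS (Finsupp.single j c) = c :=
  Finsupp.sum_single_index rfl

lemma degS_stairN (l : ℕ) : ∀ n, degS (stairN n l) = l := by
  induction l with
  | zero => intro n; simp [stairN, degS]
  | succ l ih =>
    intro n
    show degS (Finsupp.single (α := ℕ+) (M := ℕ) ⟨n + 1, Nat.succ_pos n⟩ 1 + stairN (n + 1) l) = l + 1
    rw [degS_add, ih, add_comm]
    exact congrArg (l + ·) (degS_single _ 1)

lemma stairN_inj {n a b : ℕ} (h : stairN n a = stairN n b) : a = b := by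
  have := congrArg degS h
  rwa [degS_stairN, degS_stairN] at this

lemma placeDeg_zero : placeDeg (0 : (Y × ℕ+) →₀ ℕ) = 0 := Finsupp.mapDomain_zero

lemma placeDeg_add (m n : (Y × ℕ+) →₀ ℕ) : placeDeg (m + n) = placeDeg m + placeDeg n :=
  Finsupp.mapDomain_add

lemma placeDeg_single (p : Y × ℕ+) (c : ℕ) :
    placeDeg (Finsupp.single p c) = Finsupp.single p.2 c := Finsupp.mapDomain_single

lemma placeDeg_wordExpAux (l : List Y) : ∀ n, placeDeg (wordExpAux n l) = stairN n l.length := by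
  induction l with
  | nil => intro n; simp [wordExpAux, stairN, placeDeg_zero]
  | cons y u ih =>
    intro n
    show placeDeg (Finsupp.single (y, ⟨n+1, _⟩) 1 + wordExpAux (n+1) u) = _
    rw [placeDeg_add, placeDeg_single, ih]
    rfl

lemma placeDeg_wordExp (w : FreeMonoid Y) :
    placeDeg (wordExp w) = stairN 0 (FreeMonoid.length w) :=
  placeDeg_wordExpAux (FreeMonoid.toList w) 0

lemma iota_finsetSum {α : Type*} (s : Finset α) (g : α → FA K Y) :
    iota K (∑ a ∈ s, g a) = ∑ a ∈ s, iota K (g a) := by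
  simp only [iota_eq]; exact map_sum _ _ _

lemma iota_support_sum (f : FA K Y) :
    iota K f = ∑ w ∈ f.coeff.support, MvPolynomial.monomial (wordExp w) (f.coeff w) := rfl

lemma iota_homComp (d : ℕ) (f : FA K Y) :
    iota K (homComp K d f)
      = weightedHomogeneousComponent plw (stairN 0 d) (iota K f) := by
  rw [homComp, iota_finsetSum, iota_support_sum, map_sum, Finset.sum_filter]
  refine Finset.sum_congr rfl fun w _ => ?_
  rw [whc_monomial, placeDeg_wordExp]
  by_cases hl : FreeMonoid.length w = d
  · rw [if_pos hl, if_pos (by rw [hl]), iota_single]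
  · rw [if_neg hl, if_neg fun hc => hl (stairN_inj hc)]

/-- The place shift on `ℕ+`. -/
def pshift (k : ℕ) : ℕ+ → ℕ+ := fun j => ⟨j + k, Nat.add_pos_left j.2 k⟩

lemma placeDeg_shiftMon (k : ℕ) (m : (Y × ℕ+) →₀ ℕ) :
    placeDeg (shiftMon k m) = Finsupp.mapDomain (pshift k) (placeDeg m) := by
  rw [shiftMon, placeDeg, placeDeg, ← Finsupp.mapDomain_comp, ← Finsupp.mapDomain_comp]
  rfl

lemma isMultiHomog_shift {X : Type*} {μ : ℕ+ →₀ ℕ} {f : PL K (Option X)} (k : ℕ)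
    (h : IsMultiHomog K μ f) :
    IsMultiHomog K (Finsupp.mapDomain (pshift k) μ) (shift K k f) := by
  intro m hm
  obtain ⟨u, hu, hcoeff⟩ :=
    coeff_rename_ne_zero _ _ _ (MvPolynomial.mem_support_iff.mp hm)
  rw [← hu, ← shiftMon, placeDeg_shiftMon, h u (MvPolynomial.mem_support_iff.mpr hcoeff)]

lemma whc_mem_J {X : Type*} {J : Ideal (PL K (Option X))} (hJ : IsLPIdeal K J)
    {h : PL K (Option X)} (hh : h ∈ J) (μ : ℕ+ →₀ ℕ) :
    weightedHomogeneousComponent plw μ h ∈ J := by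
  rw [hJ.2] at hh ⊢
  rw [nspan] at hh ⊢
  refine whc_mem_of_mem_span ?_ hh μ
  rintro s ⟨k, g, hg, rfl⟩
  obtain ⟨μ', hμ'⟩ := hg.2.2
  exact ⟨Finsupp.mapDomain (pshift k) μ', isMultiHomog_shift k hμ'⟩

end Aux3
noncomputable section Aux4
open MvPolynomial

variable {K : Type*} [Field K] {Y : Type*}

lemma iota_zero : iota K (0 : FA K Y) = 0 := by rw [iota_eq, map_zero]

lemma iota_add (f g : FA K Y) : iota K (f + g) = iota K f + iota K g := by
  rw [iota_eq, iota_eq, iota_eq, map_add]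

lemma iota_neg (f : FA K Y) : iota K (-f) = -iota K f := by
  rw [iota_eq, iota_eq, map_neg]

lemma iota_sub (f g : FA K Y) : iota K (f - g) = iota K f - iota K g := by
  rw [iota_eq, iota_eq, iota_eq, map_sub]

lemma iota_smul (c : K) (f : FA K Y) : iota K (c • f) = c • iota K f := by
  rw [iota_eq, iota_eq, map_smul]

lemma shift_monomial (k : ℕ) (m : (Y × ℕ+) →₀ ℕ) (c : K) :
    shift K k (MvPolynomial.monomial m c) = MvPolynomial.monomial (shiftMon k m) c := by
  rw [shift, rename_monomial]; rfl

lemma iota_single_mul (w : FreeMonoid Y) (c : K) (f : FA K Y) :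
    iota K (MonoidAlgebra.single w c * f)
      = MvPolynomial.monomial (wordExp w) c * shift K (FreeMonoid.length w) (iota K f) := by
  induction f using MonoidAlgebra.induction with
  | zero => rw [mul_zero, iota_zero, map_zero, mul_zero]
  | single_add w' c' g hg hc ih =>
    rw [mul_add, iota_add, iota_add, MonoidAlgebra.single_mul_single, iota_single,
      iota_single, map_add, mul_add, ih, shift_monomial, monomial_mul, wordExp_mul]

lemma iota_mul_single {d : ℕ} {f : FA K Y} (hf : IsHomog K d f) (w : FreeMonoid Y) (c : K) :
    iota K (f * MonoidAlgebra.single w c)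
      = iota K f * MvPolynomial.monomial (shiftMon d (wordExp w)) c := by
  have hrep : f = ∑ w' ∈ f.coeff.support, MonoidAlgebra.single w' (f.coeff w') :=
    (MonoidAlgebra.sum_coeff_single f).symm
  conv_lhs => rw [hrep]
  conv_rhs => rw [hrep]
  rw [Finset.sum_mul, iota_finsetSum, iota_finsetSum, Finset.sum_mul]
  refine Finset.sum_congr rfl fun w' hw' => ?_
  rw [MonoidAlgebra.single_mul_single, iota_single, iota_single, monomial_mul, wordExp_mul,
    hf w' hw']

lemma mem_J_mul_left {X : Type*} {J : Ideal (PL K (Option X))} (hJ : IsLPIdeal K J)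
    (g : FA K (Option X)) {f : FA K (Option X)} (hf : iota K f ∈ J) :
    iota K (g * f) ∈ J := by
  induction g using MonoidAlgebra.induction with
  | zero => rw [zero_mul, iota_zero]; exact J.zero_mem
  | single_add w c g' hw hc ih =>
    rw [add_mul, iota_add]
    refine J.add_mem ?_ ih
    rw [iota_single_mul]
    exact Ideal.mul_mem_left _ _ (hJ.1 _ _ hf)

lemma isHomog_homComp (d : ℕ) (f : FA K Y) : IsHomog K d (homComp K d f) := by
  classical
  intro w hw
  rw [homComp, MonoidAlgebra.coeff_sum] at hw
  have hsub := Finsupp.support_finset_sum (s := f.coeff.support.filter (fun w => FreeMonoid.length w = d))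
    (f := fun w' => (MonoidAlgebra.single w' (f.coeff w')).coeff) hw
  obtain ⟨w', hw', hmem⟩ := Finset.mem_biUnion.mp hsub
  have : w = w' := by
    have := Finsupp.support_single_subset hmem
    simpa using this
  subst this
  exact (Finset.mem_filter.mp hw').2

lemma sum_homComp (f : FA K Y) :
    ∑ d ∈ Finset.range (degF K f + 1), homComp K d f = f := by
  have h := Finset.sum_fiberwise_of_maps_to (s := f.coeff.support) (t := Finset.range (degF K f + 1))
    (g := fun w => FreeMonoid.length w)
    (fun w hw => Finset.mem_range.mpr (Nat.lt_succ_of_le (Finset.le_sup hw)))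
    (fun w => MonoidAlgebra.single w (f.coeff w))
  simp only [homComp]
  rw [h]
  exact MonoidAlgebra.sum_coeff_single f

lemma mem_J_homog_mul_right {X : Type*} {J : Ideal (PL K (Option X))} {d : ℕ}
    {h : FA K (Option X)} (hh : IsHomog K d h) (hhJ : iota K h ∈ J) (g : FA K (Option X)) :
    iota K (h * g) ∈ J := by
  induction g using MonoidAlgebra.induction with
  | zero => rw [mul_zero, iota_zero]; exact J.zero_mem
  | single_add w c g' hw hc ih =>
    rw [mul_add, iota_add]
    refine J.add_mem ?_ ih
    rw [iota_mul_single hh]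
    exact Ideal.mul_mem_right _ _ hhJ

lemma mem_J_mul_right {X : Type*} {J : Ideal (PL K (Option X))} (hJ : IsLPIdeal K J)
    {f : FA K (Option X)} (hf : iota K f ∈ J) (g : FA K (Option X)) :
    iota K (f * g) ∈ J := by
  have h2 : iota K ((∑ d ∈ Finset.range (degF K f + 1), homComp K d f) * g) ∈ J := by
    rw [Finset.sum_mul, iota_finsetSum]
    refine Ideal.sum_mem _ fun d _ => ?_
    exact mem_J_homog_mul_right (isHomog_homComp d f)
      (by rw [iota_homComp]; exact whc_mem_J hJ hf _) g
  rwa [sum_homComp] at h2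

end Aux4
noncomputable section Aux5
open MvPolynomial

variable {K : Type*} [Field K] {Y : Type*} {X : Type*}

/-- The letterplace monomial of a word given as a list. -/
def iw (K : Type*) [Field K] {X : Type*} (l : List (Option X)) : PL K (Option X) :=
  MvPolynomial.monomial (wordExpAux 0 l) 1

lemma iw_eq_iota (l : List (Option X)) :
    iw K l = iota K (MonoidAlgebra.single (FreeMonoid.ofList l) (1 : K)) := by
  rw [iota_single]; rfl

lemma wordExpAux_cons (y : Y) (l : List Y) (n : ℕ) :
    wordExpAux n (y :: l) = Finsupp.single (y, ⟨n + 1, Nat.succ_pos n⟩) 1 + wordExpAux (n+1) l :=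
  rfl

lemma pnat_one : (⟨0 + 1, Nat.succ_pos 0⟩ : ℕ+) = 1 := rfl

lemma pnat_two : (2 : ℕ+) = ⟨1 + 1, Nat.succ_pos 1⟩ := rfl

lemma shiftVar_zero : shiftVar (Y := Y) 0 = id := by
  funext p
  obtain ⟨y, ⟨v, hv⟩⟩ := p
  simp only [shiftVar, id]
  exact congrArg _ (pnat_mk_eq _ _ (by rw [add_zero]; rfl))

lemma shift_zero (f : PL K Y) : shift K 0 f = f := by
  rw [shift, shiftVar_zero]
  exact rename_id_apply f

lemma iw_cons (a : Option X) (l : List (Option X)) :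
    iw K (a :: l) = MvPolynomial.X (a, (1 : ℕ+)) * shift K 1 (iw K l) := by
  rw [iw, iw, shift_monomial, wordExpAux_cons, pnat_one, wordExpAux_shift]
  show _ = MvPolynomial.monomial (Finsupp.single ((a, 1) : Option X × ℕ+) 1) 1 * _
  rw [monomial_mul, one_mul]
  rfl

lemma prefix_congr {J : Ideal (PL K (Option X))} (hJ : IsLPIdeal K J) (a : Option X)
    {l l' : List (Option X)} (h : iw K l - iw K l' ∈ J) :
    iw K (a :: l) - iw K (a :: l') ∈ J := by
  have hid : iw K (a :: l) - iw K (a :: l')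
      = MvPolynomial.X (a, (1 : ℕ+)) * shift K 1 (iw K l - iw K l') := by
    rw [map_sub, mul_sub, iw_cons, iw_cons]
  rw [hid]
  exact Ideal.mul_mem_left _ _ (hJ.1 1 _ h)

lemma swap_mem {J : Ideal (PL K (Option X))} (hD : Did K X ≤ J) (x : X)
    (v : List (Option X)) :
    iw K (none :: some x :: v) - iw K (some x :: none :: v) ∈ J := by
  have hgen : (MvPolynomial.X ((some x : Option X), (1 : ℕ+)) *
        MvPolynomial.X ((none : Option X), (2 : ℕ+)) -
      MvPolynomial.X ((none : Option X), (1 : ℕ+)) *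
        MvPolynomial.X ((some x : Option X), (2 : ℕ+)) : PL K (Option X)) ∈ Did K X :=
    Ideal.subset_span ⟨0, _, ⟨x, rfl⟩, (shift_zero _).symm⟩
  refine hD ?_
  have hmem := Ideal.mul_mem_right (MvPolynomial.monomial (wordExpAux 2 v) (1 : K)) _
    (neg_mem hgen)
  have hid : iw K (none :: some x :: v) - iw K (some x :: none :: v)
      = -(MvPolynomial.X ((some x : Option X), (1 : ℕ+)) *
        MvPolynomial.X ((none : Option X), (2 : ℕ+)) -
      MvPolynomial.X ((none : Option X), (1 : ℕ+)) *
        MvPolynomial.X ((some x : Option X), (2 : ℕ+))) *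
        MvPolynomial.monomial (wordExpAux 2 v) (1 : K) := by
    rw [neg_sub, sub_mul, iw, iw, wordExpAux_cons, wordExpAux_cons, wordExpAux_cons,
      wordExpAux_cons, pnat_one, ← pnat_two]
    simp only [MvPolynomial.X, monomial_mul, mul_one, one_mul, add_assoc]
    rfl
  rw [hid]
  exact hmem

lemma moveT {J : Ideal (PL K (Option X))} (hJ : IsLPIdeal K J) (hD : Did K X ≤ J) :
    ∀ v : List (Option X), iw K (none :: v) - iw K (v ++ [none]) ∈ J := by
  intro v
  induction v with
  | nil => simpa using J.zero_mem
  | cons a v' ih =>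
    cases a with
    | none =>
      have h1 := prefix_congr hJ none ih
      exact h1
    | some x =>
      have h1 := swap_mem hD x v'
      have h2 := prefix_congr hJ (some x) ih
      have h3 := J.add_mem h1 h2
      rw [sub_add_sub_cancel] at h3
      exact h3

/-- Erase the `t`'s (`none`s) from a word. -/
def eS {X : Type*} (l : List (Option X)) : List (Option X) := l.filter fun o => o.isSome

lemma eS_length_le (l : List (Option X)) : (eS l).length ≤ l.length :=
  List.length_filter_le _ _

lemma eS_cons_some (x : X) (l : List (Option X)) : eS (some x :: l) = some x :: eS l := rfl

lemma eS_cons_none (l : List (Option X)) : eS (none :: l) = eS l := rfl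

/-- Normal form modulo `J ⊇ D`: all `t`'s can be moved to the end of the word. -/
lemma nf_mem {J : Ideal (PL K (Option X))} (hJ : IsLPIdeal K J) (hD : Did K X ≤ J) :
    ∀ l : List (Option X),
      iw K l - iw K (eS l ++ List.replicate (l.length - (eS l).length) none) ∈ J := by
  intro l
  induction l with
  | nil => simpa [eS] using J.zero_mem
  | cons a l ih =>
    cases a with
    | some x =>
      rw [eS_cons_some]
      have hlen : (some x :: l).length - (some x :: eS l).length
          = l.length - (eS l).length := by
        simp only [List.length_cons]; omega
      rw [hlen]
      exact prefix_congr hJ (some x) ih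
    | none =>
      have h1 := prefix_congr hJ none ih
      have h2 := moveT hJ hD (eS l ++ List.replicate (l.length - (eS l).length) none)
      have h3 := J.add_mem h1 h2
      rw [sub_add_sub_cancel] at h3
      rw [eS_cons_none]
      have hlen : (none :: l).length - (eS l).length
          = (l.length - (eS l).length) + 1 := by
        simp only [List.length_cons]
        have := eS_length_le l
        omega
      rw [hlen, List.replicate_succ', ← List.append_assoc]
      exact h3

lemma phi_word (l : List (Option X)) :
    (FreeMonoid.lift fun o : Option X => Option.elim o 1 fun x => gen K (some x))
        (FreeMonoid.ofList l)
      = MonoidAlgebra.single (FreeMonoid.ofList (eS l)) (1 : K) := by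
  induction l with
  | nil =>
    rw [FreeMonoid.ofList_nil, map_one]
    rfl
  | cons a l ih =>
    rw [FreeMonoid.ofList_cons, map_mul, FreeMonoid.lift_eval_of]
    cases a with
    | none =>
      rw [Option.elim, one_mul, ih]
      rfl
    | some x =>
      rw [Option.elim, ih, gen, MonoidAlgebra.of_apply, MonoidAlgebra.single_mul_single, one_mul]
      rfl

lemma phi_single (w : FreeMonoid (Option X)) (c : K) :
    phi K (MonoidAlgebra.single w c)
      = MonoidAlgebra.single (FreeMonoid.ofList (eS (FreeMonoid.toList w))) c := by
  rw [phi, MonoidAlgebra.lift_single]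
  have := phi_word (K := K) (FreeMonoid.toList w)
  rw [FreeMonoid.ofList_toList] at this
  rw [this, MonoidAlgebra.smul_single', mul_one]

end Aux5
noncomputable section Aux6
open MvPolynomial

variable {K : Type*} [Field K] {Y : Type*} {X : Type*}

/-- The degree-`d` homogenization map (with `t`'s appended at the end). -/
def PsiL (K : Type*) [Field K] (X : Type*) (d : ℕ) : FA K (Option X) →ₗ[K] PL K (Option X) :=
  (Finsupp.lsum K fun u => MvPolynomial.monomial
    (wordExpAux 0 (FreeMonoid.toList u ++
      List.replicate (d - (FreeMonoid.toList u).length) none))) ∘ₗ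
    (MonoidAlgebra.coeffLinearEquiv K).toLinearMap

lemma PsiL_single (d : ℕ) (u : FreeMonoid (Option X)) (c : K) :
    PsiL K X d (MonoidAlgebra.single u c)
      = MvPolynomial.monomial (wordExpAux 0 (FreeMonoid.toList u ++
          List.replicate (d - (FreeMonoid.toList u).length) none)) c := by
  rw [PsiL, LinearMap.comp_apply]; exact Finsupp.lsum_single _ _ _ _

lemma iota_single_eq_iw (w : FreeMonoid (Option X)) (c : K) :
    iota K (MonoidAlgebra.single w c) = c • iw K (FreeMonoid.toList w) := by
  rw [iota_single, iw, smul_monomial, smul_eq_mul, mul_one]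
  rfl

/-- Key congruence: `ι f ≡ Ψ_d(φ f)` mod `J` for `f` homogeneous of degree `d`. -/
lemma lemB {J : Ideal (PL K (Option X))} (hJ : IsLPIdeal K J) (hD : Did K X ≤ J)
    {d : ℕ} {f : FA K (Option X)} (hf : IsHomog K d f) :
    iota K f - PsiL K X d (phi K f) ∈ J := by
  have hrep : f = ∑ w ∈ f.coeff.support, MonoidAlgebra.single w (f.coeff w) := (MonoidAlgebra.sum_coeff_single f).symm
  have hmain : iota K (∑ w ∈ f.coeff.support, MonoidAlgebra.single w (f.coeff w))
      - PsiL K X d (phi K (∑ w ∈ f.coeff.support, MonoidAlgebra.single w (f.coeff w))) ∈ J := by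
    rw [iota_finsetSum, map_sum, map_sum, ← Finset.sum_sub_distrib]
    refine Ideal.sum_mem _ fun w hw => ?_
    rw [phi_single, PsiL_single, iota_single_eq_iw]
    have hlen : FreeMonoid.toList (FreeMonoid.ofList (eS (FreeMonoid.toList w)))
        = eS (FreeMonoid.toList w) := rfl
    rw [hlen]
    have hd : d = (FreeMonoid.toList w).length := (hf w hw).symm
    subst hd
    have := nf_mem hJ hD (FreeMonoid.toList w)
    have h2 : MvPolynomial.monomial (wordExpAux 0 (eS (FreeMonoid.toList w) ++
        List.replicate ((FreeMonoid.toList w).length - (eS (FreeMonoid.toList w)).length) none))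
        (f.coeff w)
        = (f.coeff w) • iw K (eS (FreeMonoid.toList w) ++
            List.replicate ((FreeMonoid.toList w).length - (eS (FreeMonoid.toList w)).length)
            none) := by
      rw [iw, smul_monomial, smul_eq_mul, mul_one]
    rw [h2]
    have h4 : f.coeff w • (iw K (FreeMonoid.toList w) - iw K (eS (FreeMonoid.toList w) ++
        List.replicate ((FreeMonoid.toList w).length - (eS (FreeMonoid.toList w)).length)
        none)) ∈ J := by
      rw [MvPolynomial.smul_eq_C_mul]
      exact Ideal.mul_mem_left _ _ this
    rwa [smul_sub] at h4
  rwa [← hrep] at hmain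

lemma phi_support_len {d : ℕ} {f : FA K (Option X)} (hf : IsHomog K d f) :
    ∀ u ∈ (phi K f).coeff.support, (FreeMonoid.toList u).length ≤ d := by
  classical
  intro u hu
  have hrep : phi K f = ∑ w ∈ f.coeff.support, phi K (MonoidAlgebra.single w (f.coeff w)) := by
    rw [← map_sum]
    exact congrArg _ (MonoidAlgebra.sum_coeff_single f).symm
  rw [hrep, MonoidAlgebra.coeff_sum] at hu
  obtain ⟨w, hw, hmem⟩ := Finset.mem_biUnion.mp (Finsupp.support_finset_sum
    (s := f.coeff.support) (f := fun w => (phi K (MonoidAlgebra.single w (f.coeff w))).coeff) hu)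
  have hmem' : u ∈ (phi K (MonoidAlgebra.single w (f.coeff w))).coeff.support := hmem
  rw [phi_single] at hmem'
  have hu' : u = FreeMonoid.ofList (eS (FreeMonoid.toList w)) := by
    simpa using Finsupp.support_single_subset hmem'
  subst hu'
  calc (eS (FreeMonoid.toList w)).length ≤ (FreeMonoid.toList w).length := eS_length_le _
  _ = d := hf w hw

lemma wordExpAux_nil (n : ℕ) : wordExpAux n ([] : List Y) = 0 := rfl

lemma wordExpAux_singleton (n : ℕ) (y : Y) :
    wordExpAux n [y] = Finsupp.single ((y, ⟨n+1, Nat.succ_pos n⟩) : Y × ℕ+) 1 := by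
  rw [wordExpAux_cons, wordExpAux_nil, add_zero]

lemma W_snoc (l : List Y) (y : Y) :
    wordExpAux 0 (l ++ [y])
      = Finsupp.single ((y, ⟨l.length + 1, Nat.succ_pos _⟩) : Y × ℕ+) 1 + wordExpAux 0 l := by
  rw [wordExpAux_append, wordExpAux_singleton, add_comm]
  simp only [zero_add]

lemma PsiL_single_succ (u : FreeMonoid (Option X)) (c : K) {e : ℕ}
    (hu : (FreeMonoid.toList u).length ≤ e) :
    PsiL K X (e+1) (MonoidAlgebra.single u c)
      = MvPolynomial.X ((none : Option X), ⟨e+1, Nat.succ_pos e⟩) *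
          PsiL K X e (MonoidAlgebra.single u c) := by
  rw [PsiL_single, PsiL_single]
  have h1 : e + 1 - (FreeMonoid.toList u).length
      = (e - (FreeMonoid.toList u).length) + 1 := by omega
  rw [h1, List.replicate_succ', ← List.append_assoc, W_snoc]
  have h2 : (FreeMonoid.toList u ++
      List.replicate (e - (FreeMonoid.toList u).length) none).length = e := by
    rw [List.length_append, List.length_replicate]
    omega
  rw [h2]
  simp only [MvPolynomial.X, monomial_mul, one_mul]

lemma PsiL_succ_eq {g : FA K (Option X)} {e : ℕ}
    (hg : ∀ u ∈ g.coeff.support, (FreeMonoid.toList u).length ≤ e) :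
    PsiL K X (e+1) g
      = MvPolynomial.X ((none : Option X), ⟨e+1, Nat.succ_pos e⟩) * PsiL K X e g := by
  have hrep : g = ∑ u ∈ g.coeff.support, MonoidAlgebra.single u (g.coeff u) := (MonoidAlgebra.sum_coeff_single g).symm
  conv_lhs => rw [hrep]
  conv_rhs => rw [hrep]
  rw [map_sum, map_sum, Finset.mul_sum]
  exact Finset.sum_congr rfl fun u hu => PsiL_single_succ u (g.coeff u) (hg u hu)

lemma supp_PsiL_placeDeg {g : FA K (Option X)} {e : ℕ}
    (hg : ∀ u ∈ g.coeff.support, (FreeMonoid.toList u).length ≤ e) :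
    ∀ m ∈ (PsiL K X e g).support, placeDeg m = stairN 0 e := by
  classical
  intro m hm
  have hm2 : m ∈ (∑ u ∈ g.coeff.support, MvPolynomial.monomial
      (wordExpAux 0 (FreeMonoid.toList u ++
        List.replicate (e - (FreeMonoid.toList u).length) none)) (g.coeff u)).support := hm
  have hm' := MvPolynomial.support_sum hm2
  obtain ⟨u, hu, hmem⟩ := Finset.mem_biUnion.mp hm'
  have hmon : m ∈ (MvPolynomial.monomial (wordExpAux 0 (FreeMonoid.toList u ++
      List.replicate (e - (FreeMonoid.toList u).length) none)) (g.coeff u)).support := hmem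
  have hmm := MvPolynomial.support_monomial_subset hmon
  have hme : m = wordExpAux 0 (FreeMonoid.toList u ++
      List.replicate (e - (FreeMonoid.toList u).length) none) := by
    simpa using hmm
  subst hme
  rw [placeDeg_wordExpAux]
  congr 1
  rw [List.length_append, List.length_replicate]
  have := hg u hu
  omega

lemma degS_placeDeg (m : (Y × ℕ+) →₀ ℕ) : degS (placeDeg m) = m.sum fun _ k => k := by
  rw [placeDeg, degS]
  exact Finsupp.sum_mapDomain_index (fun _ => rfl) (fun _ _ _ => rfl)

lemma totalDegree_PsiL {g : FA K (Option X)} {e : ℕ}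
    (hg : ∀ u ∈ g.coeff.support, (FreeMonoid.toList u).length ≤ e)
    (h0 : PsiL K X e g ≠ 0) : (PsiL K X e g).totalDegree = e := by
  have hdeg : ∀ m ∈ (PsiL K X e g).support, (m.sum fun _ k => k) = e := by
    intro m hm
    rw [← degS_placeDeg, supp_PsiL_placeDeg hg m hm, degS_stairN]
  apply le_antisymm
  · unfold MvPolynomial.totalDegree
    exact Finset.sup_le fun m hm => le_of_eq (hdeg m hm)
  · obtain ⟨m, hm⟩ := Finset.nonempty_iff_ne_empty.mpr (MvPolynomial.support_eq_empty.not.mpr h0)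
    have h3 := MvPolynomial.le_totalDegree hm
    rwa [hdeg m hm] at h3

lemma PsiL_mem_Lset (g : FA K (Option X)) (e : ℕ)
    (hg : ∀ u ∈ g.coeff.support, (FreeMonoid.toList u).length ≤ e) :
    PsiL K X e g ∈ Lset K := by
  constructor
  · refine ⟨∑ u ∈ g.coeff.support, MonoidAlgebra.single (FreeMonoid.ofList (FreeMonoid.toList u ++
      List.replicate (e - (FreeMonoid.toList u).length) none)) (g.coeff u), ?_⟩
    rw [iota_finsetSum]
    have hrep : PsiL K X e g = ∑ u ∈ g.coeff.support, PsiL K X e (MonoidAlgebra.single u (g.coeff u)) := by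
      rw [← map_sum]
      exact congrArg _ (MonoidAlgebra.sum_coeff_single g).symm
    rw [hrep]
    exact Finset.sum_congr rfl fun u hu => by rw [iota_single, PsiL_single]; rfl
  · exact ⟨stairN 0 e, fun m hm => supp_PsiL_placeDeg hg m hm⟩

lemma desc {J : Ideal (PL K (Option X))} (hJ : IsLPIdeal K J) (hLS : IsLSat K J)
    (g : FA K (Option X)) :
    ∀ j : ℕ, ∀ e : ℕ, (∀ u ∈ g.coeff.support, (FreeMonoid.toList u).length ≤ e) →
      PsiL K X (e + j) g ∈ J → PsiL K X e g ∈ J := by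
  intro j
  induction j with
  | zero => intro e _ h; exact h
  | succ j ih =>
    intro e hg h
    have h1 : PsiL K X (e + 1) g ∈ J := by
      refine ih (e+1) (fun u hu => le_trans (hg u hu) (Nat.le_succ e)) ?_
      rw [show e + 1 + j = e + (j + 1) from by omega]
      exact h
    rw [PsiL_succ_eq hg] at h1
    by_cases h0 : PsiL K X e g = 0
    · rw [h0]; exact J.zero_mem
    · refine hLS _ (PsiL_mem_Lset g e hg) ?_
      have hteq := totalDegree_PsiL hg h0
      have hp : (⟨MvPolynomial.totalDegree (PsiL K X e g) + 1,
          Nat.succ_pos _⟩ : ℕ+) = ⟨e+1, Nat.succ_pos e⟩ := pnat_mk_eq _ _ (by omega)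
      rw [hp]
      exact h1

lemma toList_pow_none (k : ℕ) :
    FreeMonoid.toList ((FreeMonoid.of (none : Option X)) ^ k) = List.replicate k none := by
  induction k with
  | zero => rfl
  | succ k ih =>
    rw [pow_succ, FreeMonoid.toList_mul, ih, FreeMonoid.toList_of, ← List.replicate_succ']

lemma iota_hstarO (g : FA K (Option X)) :
    iota K (hstarO K g) = PsiL K X (degF K g) g := by
  rw [hstarO, iota_finsetSum]
  have hrep : PsiL K X (degF K g) g
      = ∑ u ∈ g.coeff.support, PsiL K X (degF K g) (MonoidAlgebra.single u (g.coeff u)) := by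
    rw [← map_sum]
    exact congrArg _ (MonoidAlgebra.sum_coeff_single g).symm
  rw [hrep]
  refine Finset.sum_congr rfl fun u hu => ?_
  have hexp : wordExp (u * FreeMonoid.of (none : Option X) ^ (degF K g - FreeMonoid.length u))
      = wordExpAux 0 (FreeMonoid.toList u ++
          List.replicate (degF K g - (FreeMonoid.toList u).length) none) := by
    show wordExpAux 0 (FreeMonoid.toList (u * FreeMonoid.of (none : Option X)
        ^ (degF K g - FreeMonoid.length u))) = _
    rw [FreeMonoid.toList_mul, toList_pow_none]
    rfl
  rw [iota_single, PsiL_single, hexp]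

lemma sat_key {J : Ideal (PL K (Option X))} (hJ : IsLPIdeal K J) (hD : Did K X ≤ J)
    (hLS : IsLSat K J) {f : FA K (Option X)} {d : ℕ} (hf : IsHomog K d f)
    (hfJ : iota K f ∈ J) : iota K (hstarO K (phi K f)) ∈ J := by
  have hB := lemB hJ hD hf
  have h1 : PsiL K X d (phi K f) ∈ J := by
    have h2 := J.sub_mem hfJ hB
    rwa [sub_sub_cancel] at h2
  have hsuppd : ∀ u ∈ (phi K f).coeff.support, (FreeMonoid.toList u).length ≤ d :=
    phi_support_len hf
  have hsupp : ∀ u ∈ (phi K f).coeff.support, (FreeMonoid.toList u).length ≤ degF K (phi K f) :=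
    fun u hu => Finset.le_sup hu
  have hD0d : degF K (phi K f) ≤ d := Finset.sup_le hsuppd
  have h2 : PsiL K X (degF K (phi K f)) (phi K f) ∈ J := by
    refine desc hJ hLS (phi K f) (d - degF K (phi K f)) (degF K (phi K f)) hsupp ?_
    rw [show degF K (phi K f) + (d - degF K (phi K f)) = d from by omega]
    exact h1
  rw [iota_hstarO]
  exact h2

end Aux6

/-- If `D ⊆ J ⊆ P̄` is an `L`-saturated letterplace ideal and
`I = ῑ⁻¹(J ∩ V̄)`, then `I` is a saturated graded two-sided ideal of `F̄` containing `C`. -/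
theorem statement_9 (K : Type*) [Field K] (X : Type*) [Countable X]
    (J : Ideal (PL K (Option X))) (hJ : IsLPIdeal K J) (hD : Did K X ≤ J)
    (hLS : IsLSat K J) :
    ∃ I : TwoSidedIdeal (FA K (Option X)),
      (I : Set (FA K (Option X))) =
        iota K ⁻¹' ((J : Set (PL K (Option X))) ∩ Set.range (iota K)) ∧
      IsGradedF K I ∧ Cideal K ≤ I ∧
      ∀ f ∈ I, (∃ d, IsHomog K d f) → f ∉ Cideal K → hstarO K (phi K f) ∈ I := by
  refine ⟨TwoSidedIdeal.mk' (iota K ⁻¹' (J : Set (PL K (Option X))))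
    (by simp only [Set.mem_preimage, iota_zero]; exact J.zero_mem)
    (fun {x y} hx hy => by
      simp only [Set.mem_preimage, iota_add, SetLike.mem_coe] at *
      exact J.add_mem hx hy)
    (fun {x} hx => by
      simp only [Set.mem_preimage, iota_neg, SetLike.mem_coe] at *
      exact neg_mem hx)
    (fun {x y} hy => by
      simp only [Set.mem_preimage, SetLike.mem_coe] at *
      exact mem_J_mul_left hJ x hy)
    (fun {x y} hx => by
      simp only [Set.mem_preimage, SetLike.mem_coe] at *
      exact mem_J_mul_right hJ hx y), ?_, ?_, ?_, ?_⟩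
  · rw [TwoSidedIdeal.coe_mk']
    ext f
    simp only [Set.mem_preimage, Set.mem_inter_iff, Set.mem_range, SetLike.mem_coe]
    exact ⟨fun h => ⟨h, ⟨f, rfl⟩⟩, fun h => h.1⟩
  · intro f hf d
    rw [TwoSidedIdeal.mem_mk'] at hf ⊢
    simp only [Set.mem_preimage, SetLike.mem_coe] at *
    rw [iota_homComp]
    exact whc_mem_J hJ hf _
  · rw [TwoSidedIdeal.le_iff]
    intro x hx
    have hx' : x ∈ TwoSidedIdeal.span {f | (∃ d, IsHomog K d f) ∧ phi K f = 0} := hx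
    rw [TwoSidedIdeal.mem_span_iff] at hx'
    refine hx' _ fun g hg => ?_
    obtain ⟨⟨d, hd⟩, hphi⟩ := hg
    rw [TwoSidedIdeal.coe_mk']
    simp only [Set.mem_preimage, SetLike.mem_coe]
    have hB := lemB hJ hD hd
    rwa [hphi, map_zero, sub_zero] at hB
  · intro f hf hhom _
    obtain ⟨d, hd⟩ := hhom
    rw [TwoSidedIdeal.mem_mk'] at hf ⊢
    simp only [Set.mem_preimage, SetLike.mem_coe] at *
    exact sat_key hJ hD hLS hd hf
end

section
/- Let ≺ be a monomial ordering of P(1) with x_i(1) ≺ x_j(1) if and only if i < j, extend it to the place ℕ-ordering of P, and let ≺' be the induced graded monomial ordering of F (m ≺' n iff ι(m) ≺ ι(n)). Then ≺' is the graded right lexicographic order: for words m = x_{i_1}⋯x_{i_k} and n = x_{j_1}⋯x_{j_l}, m ≺' n if and only if k < l, or k = l and there exists 1 ≤ t ≤ k with i_s = j_s for all t < s ≤ k and i_t < j_t. -/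
section Aux12

open Finsupp

lemma wordExpAux_apply (l : List ℕ) (nn z : ℕ) (j : ℕ+) :
    wordExpAux nn l (z, j) =
      if nn < (j:ℕ) ∧ (j:ℕ) ≤ nn + l.length ∧ l.getD ((j:ℕ) - nn - 1) 0 = z then 1 else 0 := by
  induction l generalizing nn with
  | nil =>
      show (0 : (ℕ × ℕ+) →₀ ℕ) (z, j) = _
      rw [if_neg]
      · simp
      · rintro ⟨h1, h2, -⟩
        simp only [List.length_nil, Nat.add_zero] at h2
        omega
  | cons y w ih =>
      show ((Finsupp.single (y, (⟨nn+1, nn.succ_pos⟩ : ℕ+)) 1 : (ℕ × ℕ+) →₀ ℕ) + wordExpAux (nn+1) w) (z, j) = _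
      rw [Finsupp.add_apply, ih, Finsupp.single_apply]
      by_cases hj : (j:ℕ) = nn + 1
      · have hje : (⟨nn+1, nn.succ_pos⟩ : ℕ+) = j := by
          apply PNat.coe_injective; simp [hj]
      -- first if condition
        have e1 : ((y, (⟨nn+1, nn.succ_pos⟩ : ℕ+)) = (z, j)) ↔ (y = z) := by
          exact ⟨fun h => congrArg Prod.fst h, fun h => by subst h; exact congrArg _ hje⟩
        rw [if_neg (by omega : ¬ (nn + 1 < (j:ℕ) ∧ _ ∧ _)), Nat.add_zero]
        have e2 : (nn < (j:ℕ) ∧ (j:ℕ) ≤ nn + (y :: w).length ∧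
            (y :: w).getD ((j:ℕ) - nn - 1) 0 = z) ↔ (y = z) := by
          have hi : (j:ℕ) - nn - 1 = 0 := by omega
          simp only [hi, List.getD_cons_zero, List.length_cons]
          constructor
          · rintro ⟨-, -, h⟩; exact h
          · intro h; exact ⟨by omega, by omega, h⟩
        split_ifs with h1 h2 h2
        · rfl
        · exact absurd (e2.mpr (e1.mp h1)) h2
        · exact absurd (e1.mpr (e2.mp h2)) h1
        · rfl
      · have hje : ¬ ((y, (⟨nn+1, nn.succ_pos⟩ : ℕ+)) = (z, j)) := by
          rintro h
          have := congrArg Prod.snd h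
          exact hj (congrArg (fun p : ℕ+ => (p:ℕ)) this).symm
        erw [if_neg hje, zero_add]
        have e : (nn + 1 < (j:ℕ) ∧ (j:ℕ) ≤ nn + 1 + w.length ∧
            w.getD ((j:ℕ) - (nn+1) - 1) 0 = z) ↔
            (nn < (j:ℕ) ∧ (j:ℕ) ≤ nn + (y :: w).length ∧
            (y :: w).getD ((j:ℕ) - nn - 1) 0 = z) := by
          simp only [List.length_cons]
          constructor
          · rintro ⟨h1, h2, h3⟩
            refine ⟨by omega, by omega, ?_⟩
            have hi : (j:ℕ) - nn - 1 = ((j:ℕ) - (nn+1) - 1) + 1 := by omega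
            rw [hi, List.getD_cons_succ]; exact h3
          · rintro ⟨h1, h2, h3⟩
            have h1' : nn + 1 < (j:ℕ) := by omega
            refine ⟨h1', by omega, ?_⟩
            have hi : (j:ℕ) - nn - 1 = ((j:ℕ) - (nn+1) - 1) + 1 := by omega
            rw [hi, List.getD_cons_succ] at h3; exact h3
        simp only [e]

lemma fiber_wordExp (m : FreeMonoid ℕ) (j : ℕ+) :
    fiber (wordExp m) j =
      if (j:ℕ) ≤ FreeMonoid.length m
      then Finsupp.single ((FreeMonoid.toList m).getD ((j:ℕ) - 1) 0) 1
      else 0 := by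
  ext z
  have h0 : fiber (wordExp m) j z = wordExp m (z, j) := rfl
  have hlen : FreeMonoid.length m = (FreeMonoid.toList m).length := rfl
  rw [h0]
  unfold wordExp
  rw [wordExpAux_apply]
  by_cases h : (j:ℕ) ≤ FreeMonoid.length m
  · rw [if_pos h, Finsupp.single_apply]
    have hc : (0 < (j:ℕ) ∧ (j:ℕ) ≤ 0 + (FreeMonoid.toList m).length ∧
        (FreeMonoid.toList m).getD ((j:ℕ) - 0 - 1) 0 = z) ↔
        ((FreeMonoid.toList m).getD ((j:ℕ) - 1) 0 = z) := by
      constructor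
      · rintro ⟨-, -, h3⟩
        simpa using h3
      · intro h3
        refine ⟨j.2, by omega, by simpa using h3⟩
    simp only [hc]
  · rw [if_neg h, if_neg]
    · simp
    · rintro ⟨-, h2, -⟩
      omega

lemma fiber_wordExp' (m : FreeMonoid ℕ) (jv : ℕ) (hjv : 0 < jv) :
    fiber (wordExp m) ⟨jv, hjv⟩ =
      if jv ≤ FreeMonoid.length m
      then Finsupp.single ((FreeMonoid.toList m).getD (jv - 1) 0) 1
      else 0 := by
  have h := fiber_wordExp m ⟨jv, hjv⟩
  rw [PNat.mk_coe] at h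
  exact h

end Aux12

/-- Let `≺` be a monomial ordering of `P(1)` with `x_i(1) ≺ x_j(1) ↔ i < j`,
extended to the place ℕ-ordering of `P`, and let `≺'` be the induced word ordering of `F`
(`m ≺' n ↔ ι(m) ≺ ι(n)`). Then `≺'` is the graded right lexicographic order. -/
theorem statement_12
    (r1 : (ℕ →₀ ℕ) → (ℕ →₀ ℕ) → Prop) (hr1 : IsMonOrd r1)
    (hvar : ∀ i j : ℕ, r1 (Finsupp.single i 1) (Finsupp.single j 1) ↔ i < j) :
    ∀ m n : FreeMonoid ℕ,
      inducedWordOrd (placeExt r1) m n ↔ grRightLex (· < ·) 0 m n := by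
  classical
  have hne : ∀ i : ℕ, (Finsupp.single i 1 : ℕ →₀ ℕ) ≠ 0 :=
    fun i h => one_ne_zero (Finsupp.single_eq_zero.mp h)
  have hz : ∀ i : ℕ, r1 0 (Finsupp.single i 1) := by
    intro i
    rcases hr1.total 0 (Finsupp.single i 1) with h | h | h
    · exact h
    · exact absurd h.symm (hne i)
    · exact absurd h (hr1.zero_min _)
  have hinj : ∀ i j : ℕ, (Finsupp.single i 1 : ℕ →₀ ℕ) = Finsupp.single j 1 → i = j :=
    fun i j h => Finsupp.single_left_injective one_ne_zero h
  intro m n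
  constructor
  · rintro ⟨⟨jv, hjv⟩, hrj, hja⟩
    rw [fiber_wordExp', fiber_wordExp'] at hrj
    rcases lt_trichotomy (FreeMonoid.length m) (FreeMonoid.length n) with hkl | hkl | hkl
    · exact Or.inl hkl
    · refine Or.inr ⟨hkl, ?_⟩
      have hjk : jv ≤ FreeMonoid.length m := by
        by_contra h
        rw [if_neg (by omega), if_neg (by omega)] at hrj
        exact hr1.irrefl _ hrj
      rw [if_pos hjk, if_pos (by omega)] at hrj
      refine ⟨jv - 1, by omega, (hvar _ _).mp hrj, ?_⟩
      intro s hs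
      by_cases hsk : s < FreeMonoid.length m
      · have h2 := hja ⟨s+1, s.succ_pos⟩ ((PNat.mk_lt_mk _ _ _ _).mpr (by omega))
        rw [fiber_wordExp', fiber_wordExp', if_pos (by omega), if_pos (by omega)] at h2
        have h3 := hinj _ _ h2
        simpa using h3
      · rw [List.getD_eq_default, List.getD_eq_default]
        · show FreeMonoid.length n ≤ s; omega
        · show FreeMonoid.length m ≤ s; omega
    · exfalso
      by_cases hjl : jv ≤ FreeMonoid.length n
      · have h2 := hja ⟨FreeMonoid.length m, by omega⟩ ((PNat.mk_lt_mk _ _ _ _).mpr (by omega))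
        rw [fiber_wordExp', fiber_wordExp', if_pos (by omega), if_neg (by omega)] at h2
        exact hne _ h2
      · rw [if_neg hjl] at hrj
        exact hr1.zero_min _ hrj
  · rintro (hkl | ⟨hkl, t, htk, hlt, hagree⟩)
    · refine ⟨⟨FreeMonoid.length n, by omega⟩, ?_, ?_⟩
      · rw [fiber_wordExp', fiber_wordExp', if_neg (by omega), if_pos (by omega)]
        exact hz _
      · rintro ⟨j'v, hj'v⟩ hj'
        replace hj' : FreeMonoid.length n < j'v := hj'
        rw [fiber_wordExp', fiber_wordExp', if_neg (by omega), if_neg (by omega)]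
    · refine ⟨⟨t+1, t.succ_pos⟩, ?_, ?_⟩
      · rw [fiber_wordExp', fiber_wordExp', if_pos (by omega), if_pos (by omega)]
        simp only [Nat.add_sub_cancel]
        exact (hvar _ _).mpr hlt
      · rintro ⟨j'v, hj'v⟩ hj'
        replace hj' : t + 1 < j'v := hj'
        rw [fiber_wordExp', fiber_wordExp']
        by_cases h : j'v ≤ FreeMonoid.length m
        · rw [if_pos h, if_pos (by omega), hagree (j'v - 1) (by omega)]
        · rw [if_neg h, if_neg (by omega)]
end
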